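/- With the height h defined from a family of normalized discrete valuations with positive integer degrees satisfying the finite-support condition and the sum formula: let p be a prime, let a, b, x, y, γ, δ ∈ K^*, let m, n > 1 be integers with gcd(m, p) = gcd(n, p) = 1, and let t ∈ ℤ_{≥0} be such that a·x^m = γ^{p^t}, b·y^n = δ^{p^t} and γ + δ = 1. Define N_3 = {i ∈ I : v_i(a) = 0, v_i(b) = 0, v_i(γ) = v_i(δ) < 0}. Then N_3 is finite and h(γ) = h(δ) ≥ lcm(m, n) · Σ_{i ∈ N_3} deg_i. -/

import Mathlib

/- Setup: `K` a field, `(v i)_{i ∈ I}` a family of normalized additive discrete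
valuations on `K`, `deg i` positive integer degrees, satisfying the
finite-support condition and the sum formula `∑ᶠ i, v i x * deg i = 0` for all
`x ∈ K*`. The height of `x ∈ K*` is `h x = ∑ᶠ i, max 0 (v i x) * deg i`. -/

/-- Let `a·x^m = γ^{p^t}`, `b·y^n = δ^{p^t}` and `γ + δ = 1` with `m, n > 1`
coprime to the prime `p`. Then
`N₃ = {i : v_i(a) = 0, v_i(b) = 0, v_i(γ) = v_i(δ) < 0}`
is finite and `h(γ) = h(δ) ≥ lcm(m, n) · ∑_{i ∈ N₃} deg i`. -/
theorem height_ge_lcm_mul_sum_N3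
    {K : Type*} [Field K] {I : Type*}
    (v : I → K → ℤ) (deg : I → ℤ) (hdeg : ∀ i, 0 < deg i)
    (hmul : ∀ (i : I) (x y : K), x ≠ 0 → y ≠ 0 → v i (x * y) = v i x + v i y)
    (hadd : ∀ (i : I) (x y : K), x ≠ 0 → y ≠ 0 → x + y ≠ 0 →
      min (v i x) (v i y) ≤ v i (x + y))
    (hfin : ∀ x : K, x ≠ 0 → {i : I | v i x ≠ 0}.Finite)
    (hsumformula : ∀ x : K, x ≠ 0 → ∑ᶠ i : I, v i x * deg i = 0)
    (h : K → ℤ) (hheight : ∀ x : K, x ≠ 0 → h x = ∑ᶠ i : I, max 0 (v i x) * deg i)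
    (p : ℕ) (hp : p.Prime)
    (a b x y γ δ : K) (ha : a ≠ 0) (hb : b ≠ 0) (hx : x ≠ 0) (hy : y ≠ 0)
    (hγ : γ ≠ 0) (hδ : δ ≠ 0)
    (m n : ℕ) (hm : 1 < m) (hn : 1 < n)
    (hmp : Nat.gcd m p = 1) (hnp : Nat.gcd n p = 1)
    (t : ℕ) (heq1 : a * x ^ m = γ ^ (p ^ t)) (heq2 : b * y ^ n = δ ^ (p ^ t))
    (hγδ : γ + δ = 1) :
    {i : I | v i a = 0 ∧ v i b = 0 ∧ v i γ = v i δ ∧ v i γ < 0}.Finite ∧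
    h γ = h δ ∧
    (Nat.lcm m n : ℤ) *
      ∑ᶠ i ∈ {i : I | v i a = 0 ∧ v i b = 0 ∧ v i γ = v i δ ∧ v i γ < 0}, deg i
      ≤ h γ := by
  -- basic valuation facts
  have v1 : ∀ i, v i (1 : K) = 0 := by
    intro i
    have := hmul i 1 1 one_ne_zero one_ne_zero
    simp only [mul_one] at this
    omega
  have vpow : ∀ (i : I) (z : K), z ≠ 0 → ∀ k : ℕ, v i (z ^ k) = k * v i z := by
    intro i z hz k
    induction k with
    | zero => simp [v1]
    | succ k ih =>
      rw [pow_succ, hmul i _ z (pow_ne_zero _ hz) hz, ih]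
      push_cast; ring
  -- divisibility on places where a (resp. b) is a unit
  have hdiv : ∀ (c z w : K) (k : ℕ), c ≠ 0 → z ≠ 0 → w ≠ 0 → Nat.gcd k p = 1 →
      c * z ^ k = w ^ (p ^ t) → ∀ i, v i c = 0 → (k : ℤ) ∣ v i w := by
    intro c z w k hc hz hw hkp heq i hvc
    have h1 : v i (c * z ^ k) = v i (w ^ (p ^ t)) := by rw [heq]
    rw [hmul i c _ hc (pow_ne_zero _ hz), hvc, zero_add, vpow i z hz, vpow i w hw] at h1
    have hd : (k : ℤ) ∣ (p ^ t : ℕ) * v i w := ⟨v i z, by push_cast at h1 ⊢; linarith⟩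
    have hcop : Int.gcd (k : ℤ) ((p ^ t : ℕ) : ℤ) = 1 := by
      rw [Int.gcd_natCast_natCast]
      exact Nat.Coprime.pow_right t hkp
    exact Int.dvd_of_dvd_mul_left_of_gcd_one (by rwa [mul_comm] at hd) hcop
  have hdivm : ∀ i, v i a = 0 → (m : ℤ) ∣ v i γ := hdiv a x γ m ha hx hγ hmp heq1
  have hdivn : ∀ i, v i b = 0 → (n : ℤ) ∣ v i δ := hdiv b y δ n hb hy hδ hnp heq2
  -- relation between v γ and v δ
  have hrel : ∀ i, max 0 (-(v i γ)) = max 0 (-(v i δ)) := by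
    intro i
    have h0 : min (v i γ) (v i δ) ≤ 0 := by
      have := hadd i γ δ hγ hδ (by rw [hγδ]; exact one_ne_zero)
      rw [hγδ, v1] at this; exact this
    have vm1 : v i (-1 : K) = 0 := by
      have := hmul i (-1) (-1) (by norm_num) (by norm_num)
      simp only [neg_mul, one_mul, neg_neg, v1] at this
      omega
    have vnegγ : v i (-γ) = v i γ := by
      rw [show (-γ : K) = (-1) * γ by ring, hmul i (-1) γ (by norm_num) hγ, vm1, zero_add]
    have vnegδ : v i (-δ) = v i δ := by
      rw [show (-δ : K) = (-1) * δ by ring, hmul i (-1) δ (by norm_num) hδ, vm1, zero_add]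
    have h1 : min 0 (v i γ) ≤ v i δ := by
      have := hadd i 1 (-γ) one_ne_zero (neg_ne_zero.2 hγ)
        (by rw [show (1 : K) + -γ = δ by linear_combination -hγδ]; exact hδ)
      rw [v1, vnegγ, show (1 : K) + -γ = δ by linear_combination -hγδ] at this
      exact this
    have h2 : min 0 (v i δ) ≤ v i γ := by
      have := hadd i 1 (-δ) one_ne_zero (neg_ne_zero.2 hδ)
        (by rw [show (1 : K) + -δ = γ by linear_combination -hγδ]; exact hγ)
      rw [v1, vnegδ, show (1 : K) + -δ = γ by linear_combination -hγδ] at this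
      exact this
    omega
  -- flip: sum of positive parts equals sum of negative parts
  have hsupp : ∀ (z : K) (g : ℤ → ℤ), g 0 = 0 →
      (Function.support fun i => g (v i z) * deg i) ⊆ {i : I | v i z ≠ 0} := by
    intro z g hg0 i hi
    simp only [Function.mem_support] at hi
    simp only [Set.mem_setOf_eq]
    intro hvi
    exact hi (by rw [hvi, hg0, zero_mul])
  have hflip : ∀ z : K, z ≠ 0 →
      ∑ᶠ i, max 0 (v i z) * deg i = ∑ᶠ i, max 0 (-(v i z)) * deg i := by
    intro z hz
    have hf1 : (Function.support fun i => max 0 (v i z) * deg i).Finite :=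
      (hfin z hz).subset (hsupp z (fun r => max 0 r) (by simp))
    have hf2 : (Function.support fun i => max 0 (-(v i z)) * deg i).Finite :=
      (hfin z hz).subset (hsupp z (fun r => max 0 (-r)) (by simp))
    have key : ∑ᶠ i, (max 0 (v i z) * deg i - max 0 (-(v i z)) * deg i) = 0 := by
      have : ∀ i, max 0 (v i z) * deg i - max 0 (-(v i z)) * deg i = v i z * deg i := by
        intro i
        rcases le_total 0 (v i z) with hle | hle
        · rw [max_eq_right hle, max_eq_left (by omega)]; ring
        · rw [max_eq_left hle, max_eq_right (by omega)]; ring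
      rw [finsum_congr this]
      exact hsumformula z hz
    have := finsum_sub_distrib hf1 hf2
    omega
  -- finiteness of N₃
  set N₃ : Set I := {i : I | v i a = 0 ∧ v i b = 0 ∧ v i γ = v i δ ∧ v i γ < 0} with hN₃def
  have hN₃fin : N₃.Finite := (hfin γ hγ).subset (by
    intro i hi
    simp only [hN₃def, Set.mem_setOf_eq] at hi ⊢
    omega)
  refine ⟨hN₃fin, ?_, ?_⟩
  · -- h γ = h δ
    rw [hheight γ hγ, hheight δ hδ, hflip γ hγ, hflip δ hδ]
    exact finsum_congr fun i => by rw [hrel i]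
  · -- the inequality
    set L : ℤ := (Nat.lcm m n : ℤ) with hLdef
    have hLpos : 0 < L := by
      have := Nat.lcm_pos (by omega : 0 < m) (by omega : 0 < n)
      rw [hLdef]; exact_mod_cast this
    -- on N₃, L ≤ -(v i γ)
    have hLle : ∀ i ∈ N₃, L ≤ -(v i γ) := by
      intro i hi
      obtain ⟨hva, hvb, hvgd, hvneg⟩ := hi
      have hdm : (m : ℤ) ∣ v i γ := hdivm i hva
      have hdn : (n : ℤ) ∣ v i γ := hvgd ▸ hdivn i hvb
      have hdL : L ∣ -(v i γ) := by
        have := Int.coe_lcm_dvd_iff.mpr ⟨hdm.neg_right, hdn.neg_right⟩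
        rwa [show Int.lcm (m : ℤ) (n : ℤ) = Nat.lcm m n by
          simp [Int.lcm, Int.natAbs_natCast]] at this
      exact Int.le_of_dvd (by omega) hdL
    -- reduce to finset sums
    have hFfin := hfin γ hγ
    have hsub : hN₃fin.toFinset ⊆ hFfin.toFinset := by
      intro i hi
      simp only [Set.Finite.mem_toFinset, Set.mem_setOf_eq] at hi ⊢
      rcases hi with ⟨_, _, _, h4⟩; omega
    have e1 : ∑ᶠ i ∈ N₃, deg i = ∑ i ∈ hN₃fin.toFinset, deg i := by
      rw [← finsum_mem_coe_finset, Set.Finite.coe_toFinset]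
    have e2 : h γ = ∑ i ∈ hFfin.toFinset, max 0 (-(v i γ)) * deg i := by
      rw [hheight γ hγ, hflip γ hγ]
      exact finsum_eq_sum_of_support_subset _ (by
        intro i hi
        simp only [Finset.coe_sort_coe, Set.Finite.coe_toFinset]
        exact hsupp γ (fun r => max 0 (-r)) (by simp) hi)
    rw [e1, e2, Finset.mul_sum]
    calc ∑ i ∈ hN₃fin.toFinset, L * deg i
        ≤ ∑ i ∈ hN₃fin.toFinset, max 0 (-(v i γ)) * deg i := by
          apply Finset.sum_le_sum
          intro i hi
          have hiN : i ∈ N₃ := by simpa [Set.Finite.mem_toFinset] using hi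
          have hmax : L ≤ max 0 (-(v i γ)) := le_trans (hLle i hiN) (le_max_right _ _)
          exact mul_le_mul_of_nonneg_right hmax (le_of_lt (hdeg i))
      _ ≤ ∑ i ∈ hFfin.toFinset, max 0 (-(v i γ)) * deg i := by
          apply Finset.sum_le_sum_of_subset_of_nonneg hsub
          intro i _ _
          have := hdeg i
          positivity
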